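/- For any polynomial v of degree at most p on the interval (-1,1), the supremum norm of v is bounded by (p+1)/√2 times the L²(-1,1) norm of v. -/

import Mathlib

open MeasureTheory
open Polynomial

noncomputable def fL (n : ℕ) : Polynomial ℝ := (X ^ 2 - 1) ^ n
noncomputable def RL (n : ℕ) : Polynomial ℝ := derivative^[n] (fL n)

lemma fL_monic (n : ℕ) : (fL n).Monic := by
  rw [fL, show (X ^ 2 - 1 : Polynomial ℝ) = X ^ 2 - C 1 by simp]
  exact (monic_X_pow_sub_C (1:ℝ) (by norm_num)).pow n

lemma fL_natDegree (n : ℕ) : (fL n).natDegree = 2 * n := by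
  rw [fL, show (X ^ 2 - 1 : Polynomial ℝ) = X ^ 2 - C 1 by simp, natDegree_pow,
    natDegree_X_pow_sub_C, mul_comm]

lemma pint (q : Polynomial ℝ) (a b : ℝ) :
    IntervalIntegrable (fun x => q.eval x) MeasureTheory.volume a b :=
  (q.continuous).intervalIntegrable a b

-- FTC for polynomials
lemma poly_ftc (q : Polynomial ℝ) (a b : ℝ) :
    ∫ x in a..b, (derivative q).eval x = q.eval b - q.eval a := by
  apply intervalIntegral.integral_deriv_eq_sub' (f := fun x => q.eval x)
  · ext x; exact q.deriv
  · intro x _; exact q.differentiableAt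
  · exact (Polynomial.continuous _).continuousOn

-- integration by parts for polynomials
lemma poly_ibp (u v : Polynomial ℝ) (a b : ℝ) :
    ∫ x in a..b, (derivative u).eval x * v.eval x =
      (u.eval b * v.eval b - u.eval a * v.eval a)
        - ∫ x in a..b, u.eval x * (derivative v).eval x := by
  have h := poly_ftc (u * v) a b
  rw [derivative_mul] at h
  have hsplit : (∫ x in a..b, ((derivative u * v + u * derivative v)).eval x)
      = (∫ x in a..b, (derivative u).eval x * v.eval x)
        + ∫ x in a..b, u.eval x * (derivative v).eval x := by
    have := intervalIntegral.integral_add (pint (derivative u * v) a b)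
      (pint (u * derivative v) a b)
    simpa only [eval_add, eval_mul] using this
  rw [hsplit] at h
  simp only [eval_mul] at h
  linarith

-- boundary vanishing: for k < n, derivative^[k] (fL n) vanishes at ±1
lemma boundary_zero {n k : ℕ} (hk : k < n) {x : ℝ} (hx : x ^ 2 = 1) :
    (derivative^[k] (fL n)).eval x = 0 := by
  obtain ⟨c, hc⟩ := pow_sub_dvd_iterate_derivative_pow (X ^ 2 - 1 : Polynomial ℝ) n k
  rw [fL, hc, eval_mul, eval_pow]
  have : ((X:Polynomial ℝ) ^ 2 - 1).eval x = 0 := by simp [hx]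
  rw [this, zero_pow (by omega), zero_mul]

-- iterated integration by parts
lemma iter_ibp (n : ℕ) (q : Polynomial ℝ) :
    ∀ k ≤ n, (∫ x in (-1:ℝ)..1, (RL n).eval x * q.eval x)
      = (-1:ℝ)^k * ∫ x in (-1:ℝ)..1,
          (derivative^[n - k] (fL n)).eval x * (derivative^[k] q).eval x := by
  intro k hk
  induction k with
  | zero => simp [RL]
  | succ k ih =>
    rw [ih (by omega)]
    have hlt : n - (k+1) < n := by omega
    have hd : derivative^[n - k] (fL n) = derivative (derivative^[n - (k+1)] (fL n)) := by
      rw [show n - k = (n - (k+1)) + 1 by omega, Function.iterate_succ_apply']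
    rw [hd, poly_ibp]
    rw [boundary_zero hlt (by norm_num), boundary_zero hlt (by norm_num)]
    rw [← Function.iterate_succ_apply' derivative k q]
    ring

lemma RL_inner (n : ℕ) (q : Polynomial ℝ) :
    (∫ x in (-1:ℝ)..1, (RL n).eval x * q.eval x)
      = (-1:ℝ)^n * ∫ x in (-1:ℝ)..1, (fL n).eval x * (derivative^[n] q).eval x := by
  simpa using iter_ibp n q n le_rfl

lemma RL_natDegree_le (n : ℕ) : (RL n).natDegree ≤ n := by
  have := natDegree_iterate_derivative (fL n) n
  rw [fL_natDegree] at this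
  rw [RL]
  omega

lemma RL_orth {m n : ℕ} (h : m < n) :
    (∫ x in (-1:ℝ)..1, (RL n).eval x * (RL m).eval x) = 0 := by
  rw [RL_inner, iterate_derivative_eq_zero (lt_of_le_of_lt (RL_natDegree_le m) h)]
  simp

lemma RL_coeff_n (n : ℕ) : (RL n).coeff n = ((2*n).descFactorial n : ℝ) := by
  rw [RL, coeff_iterate_derivative]
  have h1 : (fL n).coeff (n + n) = 1 := by
    have := (fL_monic n).leadingCoeff
    rwa [leadingCoeff, fL_natDegree, two_mul] at this
  rw [h1, nsmul_eq_mul, mul_one, two_mul]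

lemma iterate_derivative_RL (n : ℕ) :
    derivative^[n] (RL n) = C (((2*n).factorial : ℝ)) := by
  rw [RL, ← Function.iterate_add_apply]
  ext m
  rw [coeff_iterate_derivative]
  rcases Nat.eq_zero_or_pos m with hm | hm
  · subst hm
    have h1 : (fL n).coeff (0 + (n+n)) = 1 := by
      have := (fL_monic n).leadingCoeff
      rw [leadingCoeff, fL_natDegree, two_mul] at this
      simpa using this
    rw [h1, nsmul_eq_mul, mul_one, coeff_C]
    simp [two_mul, Nat.descFactorial_self]
  · have h1 : (fL n).coeff (m + (n+n)) = 0 := by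
      apply coeff_eq_zero_of_natDegree_lt
      rw [fL_natDegree]; omega
    rw [h1, coeff_C, if_neg (by omega)]
    simp

noncomputable def JL (n : ℕ) : ℝ := ∫ x in (-1:ℝ)..1, (fL n).eval x

lemma JL_rec (n : ℕ) : (2*(n:ℝ)+3) * JL (n+1) = -(2*(n:ℝ)+2) * JL n := by
  have key : derivative (X * fL (n+1)) =
      C (2*(n:ℝ)+3) * fL (n+1) + C (2*(n:ℝ)+2) * fL n := by
    have hd : derivative ((X^2 - 1 : Polynomial ℝ)^(n+1))
        = C ((n:ℝ)+1) * (X^2-1)^n * (2*X) := by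
      rw [derivative_pow]
      simp only [Nat.cast_add, Nat.cast_one, Nat.add_sub_cancel, derivative_sub,
        derivative_one, derivative_X_pow, C_add, C_1, map_ofNat, Nat.cast_ofNat]
      ring
    rw [fL, fL, derivative_mul, derivative_X, hd]
    have hC3 : (C (2*(n:ℝ)+3) : Polynomial ℝ) = 2 * (C (n:ℝ)) + 3 := by
      simp only [C_add, C_mul, map_ofNat]
    have hC2 : (C (2*(n:ℝ)+2) : Polynomial ℝ) = 2 * (C (n:ℝ)) + 2 := by
      simp only [C_add, C_mul, map_ofNat]
    have hC1 : (C ((n:ℝ)+1) : Polynomial ℝ) = (C (n:ℝ)) + 1 := by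
      simp [C_add]
    rw [hC3, hC2, hC1, pow_succ]
    ring
  have h := poly_ftc (X * fL (n+1)) (-1) 1
  rw [key] at h
  have e1 : (X * fL (n+1)).eval 1 = 0 := by
    simp [fL]
  have em1 : (X * fL (n+1)).eval (-1) = 0 := by
    simp [fL]
  rw [e1, em1] at h
  have hsplit : (∫ x in (-1:ℝ)..1, (C (2*(n:ℝ)+3) * fL (n+1) + C (2*(n:ℝ)+2) * fL n).eval x)
      = (2*(n:ℝ)+3) * JL (n+1) + (2*(n:ℝ)+2) * JL n := by
    have := intervalIntegral.integral_add (pint (C (2*(n:ℝ)+3) * fL (n+1)) (-1) 1)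
      (pint (C (2*(n:ℝ)+2) * fL n) (-1) 1)
    simp only [eval_add, eval_mul, eval_C] at this ⊢
    rw [this, intervalIntegral.integral_const_mul, intervalIntegral.integral_const_mul]
    rfl
  rw [hsplit] at h
  linarith

lemma JL_val (n : ℕ) :
    ((2*n+1).factorial : ℝ) * JL n = (-1:ℝ)^n * 2^(2*n+1) * ((n.factorial : ℝ))^2 := by
  induction n with
  | zero =>
    have : JL 0 = 2 := by
      simp only [JL, fL, pow_zero, eval_one]
      simp
      norm_num
    rw [this]
    norm_num [Nat.factorial_one]
  | succ n ih =>
    have hrec := JL_rec n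
    have hf : ((2*(n+1)+1).factorial : ℝ)
        = (2*(n:ℝ)+3) * ((2*(n:ℝ))+2) * ((2*n+1).factorial : ℝ) := by
      have : 2*(n+1)+1 = (2*n+1) + 1 + 1 := by omega
      rw [this, Nat.factorial_succ, Nat.factorial_succ]
      push_cast
      ring
    have hcast : (((n+1).factorial : ℕ) : ℝ) = ((n:ℝ)+1) * (n.factorial : ℝ) := by
      rw [Nat.factorial_succ]; push_cast; ring
    rw [hf, hcast]
    linear_combination (2*(n:ℝ)+2) * ((2*n+1).factorial:ℝ) * hrec - (2*(n:ℝ)+2)^2 * ih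

lemma RL_sq (n : ℕ) :
    (2*(n:ℝ)+1) * (∫ x in (-1:ℝ)..1, (RL n).eval x ^ 2)
      = 2^(2*n+1) * ((n.factorial:ℝ))^2 := by
  have h := RL_inner n (RL n)
  rw [iterate_derivative_RL] at h
  have h2 : (∫ x in (-1:ℝ)..1, (fL n).eval x * (C ((2*n).factorial:ℝ)).eval x)
      = ((2*n).factorial:ℝ) * JL n := by
    simp only [eval_C]
    rw [intervalIntegral.integral_mul_const, JL]
    ring
  rw [h2] at h
  have h3 : (∫ x in (-1:ℝ)..1, (RL n).eval x ^ 2)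
      = ∫ x in (-1:ℝ)..1, (RL n).eval x * (RL n).eval x := by
    simp only [sq]
  have hfact : (((2*n+1).factorial : ℕ) : ℝ) = (2*(n:ℝ)+1) * ((2*n).factorial : ℝ) := by
    rw [Nat.factorial_succ]; push_cast; ring
  have hv := JL_val n
  rw [hfact] at hv
  have hsq : (-1:ℝ)^n * (-1:ℝ)^n = 1 := by
    rw [← pow_add]
    exact Even.neg_one_pow ⟨n, rfl⟩
  rw [h3, h]
  linear_combination ((-1:ℝ)^n) * hv + (2^(2*n+1) * ((n.factorial:ℝ))^2) * hsq

lemma dXsq : derivative (X^2 - 1 : Polynomial ℝ) = 2 * X := by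
  rw [derivative_sub, derivative_one, derivative_X_pow]
  simp [map_ofNat]

lemma TT0 (n : ℕ) : (X^2 - 1 : Polynomial ℝ) * derivative^[1] (fL n)
    = 2*(n : Polynomial ℝ) * (X * fL n) := by
  rcases n with _ | m
  · simp [fL]
  · rw [Function.iterate_one, fL, derivative_pow, dXsq, Nat.add_sub_cancel, pow_succ,
      C_eq_natCast]
    push_cast
    ring

lemma TT (n : ℕ) : ∀ k : ℕ, (X^2 - 1 : Polynomial ℝ) * derivative^[k+2] (fL n)
    = (2*(n : Polynomial ℝ) - 2*((k : Polynomial ℝ)+1)) * (X * derivative^[k+1] (fL n))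
      + (((k : Polynomial ℝ)+1) * (2*(n : Polynomial ℝ) - (k : Polynomial ℝ)))
          * derivative^[k] (fL n) := by
  intro k
  induction k with
  | zero =>
    have hd := congrArg derivative (TT0 n)
    simp only [derivative_mul, derivative_sub, derivative_natCast, derivative_ofNat,
      derivative_one, derivative_X, derivative_X_pow, C_eq_natCast, map_ofNat, Nat.cast_ofNat,
      pow_one, Nat.reduceSub, zero_mul, mul_zero, zero_add, add_zero,
      mul_one, sub_zero, Function.iterate_one] at hd
    have eA : derivative (fL n) = derivative^[1] (fL n) := rfl
    have eB : derivative (derivative^[1] (fL n)) = derivative^[2] (fL n) :=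
      (Function.iterate_succ_apply' derivative 1 (fL n)).symm
    rw [eA, eB] at hd
    simp only [Nat.cast_zero, Function.iterate_zero, id_eq, zero_add]
    linear_combination hd
  | succ k ih =>
    have hd := congrArg derivative ih
    simp only [derivative_add, derivative_mul, derivative_sub, derivative_natCast,
      derivative_ofNat, derivative_one, derivative_X, derivative_X_pow, C_eq_natCast, map_ofNat,
      Nat.cast_ofNat, pow_one, Nat.reduceSub, zero_mul, mul_zero,
      zero_add, add_zero, mul_one, sub_zero] at hd
    have eA : derivative (derivative^[k] (fL n)) = derivative^[k+1] (fL n) :=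
      (Function.iterate_succ_apply' derivative k (fL n)).symm
    have eB : derivative (derivative^[k+1] (fL n)) = derivative^[k+2] (fL n) :=
      (Function.iterate_succ_apply' derivative (k+1) (fL n)).symm
    have eC : derivative (derivative^[k+2] (fL n)) = derivative^[k+3] (fL n) :=
      (Function.iterate_succ_apply' derivative (k+2) (fL n)).symm
    rw [eC, eB, eA] at hd
    rw [show k+1+2 = k+3 from rfl, show k+1+1 = k+2 from rfl]
    push_cast
    linear_combination hd

lemma RL_ode (n : ℕ) : (X^2 - 1 : Polynomial ℝ) * derivative (derivative (RL n))
    = -(2 * (X * derivative (RL n)))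
      + ((n : Polynomial ℝ) * ((n : Polynomial ℝ) + 1)) * RL n := by
  have h := TT n n
  have e1 : derivative^[n+2] (fL n) = derivative (derivative (RL n)) := by
    rw [RL, ← Function.iterate_succ_apply' derivative n,
      ← Function.iterate_succ_apply' derivative (n+1)]
  have e2 : derivative^[n+1] (fL n) = derivative (RL n) := by
    rw [RL, ← Function.iterate_succ_apply' derivative n]
  rw [e1, e2, show derivative^[n] (fL n) = RL n from rfl] at h
  linear_combination h

lemma fL_factor (n : ℕ) : fL n = (X - 1)^n * (X + 1)^n := by
  rw [fL, ← mul_pow]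
  congr 1
  ring

lemma eval_aux (n : ℕ) (s : ℝ) (hs : s = 1 ∨ s = -1) :
    ∀ k, k ≤ n → ∃ q : Polynomial ℝ, derivative^[k] (fL n) = (X - C s)^(n-k) * q
      ∧ q.eval s = (n.descFactorial k : ℝ) * (2*s)^n := by
  intro k
  induction k with
  | zero =>
    intro _
    refine ⟨(X + C s)^n, ?_, ?_⟩
    · simp only [Function.iterate_zero, id_eq, Nat.sub_zero, fL, ← mul_pow]
      congr 1
      have hss : (C s)^2 = 1 := by
        rcases hs with h | h <;> rw [h]
        · rw [C_1]; norm_num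
        · rw [C_neg, C_1]; norm_num
      linear_combination hss
    · simp [eval_pow, Nat.descFactorial_zero]
      ring
  | succ k ih =>
    intro hk
    obtain ⟨q, hq, he⟩ := ih (by omega)
    refine ⟨((n - k : ℕ) : Polynomial ℝ) * q + (X - C s) * derivative q, ?_, ?_⟩
    · rw [Function.iterate_succ_apply', hq, derivative_mul, derivative_pow,
        derivative_sub, derivative_X, derivative_C, sub_zero, mul_one]
      have hnk : n - k = (n - (k+1)) + 1 := by omega
      rw [hnk]
      simp only [Nat.cast_add, Nat.cast_one, C_add, C_1, C_eq_natCast, Nat.add_sub_cancel, Nat.add_sub_cancel_left]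
      ring
    · simp only [eval_add, eval_mul, eval_natCast, eval_sub, eval_X, eval_C, sub_self,
        zero_mul, add_zero, he, Nat.descFactorial_succ]
      push_cast
      ring

lemma RL_eval_one (n : ℕ) : (RL n).eval 1 = (n.factorial : ℝ) * 2^n := by
  obtain ⟨q, hq, he⟩ := eval_aux n 1 (Or.inl rfl) n le_rfl
  rw [RL, hq, Nat.sub_self, pow_zero, one_mul, he, Nat.descFactorial_self]
  norm_num

lemma RL_eval_neg_one (n : ℕ) : (RL n).eval (-1) = (n.factorial : ℝ) * (-2)^n := by
  obtain ⟨q, hq, he⟩ := eval_aux n (-1) (Or.inr rfl) n le_rfl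
  rw [RL, hq, Nat.sub_self, pow_zero, one_mul, he, Nat.descFactorial_self]
  norm_num

noncomputable def Gg (n : ℕ) : Polynomial ℝ :=
  ((n : Polynomial ℝ) * ((n : Polynomial ℝ) + 1)) * (RL n)^2
    + (1 - X^2) * (derivative (RL n))^2

lemma GL_deriv (n : ℕ) : derivative (Gg n) = 2 * (X * (derivative (RL n))^2) := by
  rw [Gg]
  simp only [derivative_add, derivative_mul, derivative_sub, derivative_one,
    derivative_natCast, derivative_pow, derivative_X, derivative_X_pow, C_eq_natCast,
    map_ofNat, Nat.cast_ofNat, pow_one, Nat.reduceSub, zero_mul, mul_zero, zero_add,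
    add_zero, mul_one, sub_zero, zero_sub]
  linear_combination (-2 * derivative (RL n)) * RL_ode n

lemma GL_eval_eq (n : ℕ) (t : ℝ) :
    (Gg n).eval t = ((n:ℝ) * ((n:ℝ)+1)) * ((RL n).eval t)^2
      + (1 - t^2) * ((derivative (RL n)).eval t)^2 := by
  simp [Gg]

lemma RL_bound (n : ℕ) {x : ℝ} (hx : x ∈ Set.Icc (-1:ℝ) 1) :
    |(RL n).eval x| ≤ 2^n * (n.factorial : ℝ) := by
  rcases Nat.eq_zero_or_pos n with h0 | hpos
  · subst h0
    simp [RL, fL]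
  · set m : ℝ := (n:ℝ) * ((n:ℝ)+1) with hm_def
    have hm : 0 < m := by
      have : (0:ℝ) < n := by exact_mod_cast hpos
      positivity
    set g : ℝ → ℝ := fun t => (Gg n).eval t with hg_def
    have hderiv : ∀ t : ℝ, deriv g t = 2 * (t * ((derivative (RL n)).eval t)^2) := by
      intro t
      rw [hg_def, Polynomial.deriv, GL_deriv]
      simp
    have hcont : Continuous g := (Gg n).continuous
    have hdiff : Differentiable ℝ g := fun t => (Gg n).differentiableAt
    have mono : MonotoneOn g (Set.Icc (0:ℝ) 1) := by
      apply monotoneOn_of_deriv_nonneg (convex_Icc 0 1) hcont.continuousOn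
        hdiff.differentiableOn
      intro t ht
      rw [interior_Icc] at ht
      rw [hderiv]
      have := ht.1
      positivity
    have anti : AntitoneOn g (Set.Icc (-1:ℝ) 0) := by
      apply antitoneOn_of_deriv_nonpos (convex_Icc (-1) 0) hcont.continuousOn
        hdiff.differentiableOn
      intro t ht
      rw [interior_Icc] at ht
      rw [hderiv]
      have h1 : t ≤ 0 := le_of_lt ht.2
      nlinarith [sq_nonneg ((derivative (RL n)).eval t)]
    have gone : g 1 = m * (2^n * (n.factorial:ℝ))^2 := by
      rw [hg_def]
      simp only [GL_eval_eq, RL_eval_one]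
      ring
    have gmone : g (-1) = m * (2^n * (n.factorial:ℝ))^2 := by
      rw [hg_def]
      simp only [GL_eval_eq, RL_eval_neg_one]
      have hsq2 : (((-2:ℝ))^n)^2 = ((2:ℝ)^n)^2 := by
        rw [← pow_mul, ← pow_mul, neg_pow]
        rw [Even.neg_one_pow (⟨n, by ring⟩ : Even (n*2)), one_mul]
      rw [hm_def]
      linear_combination ((n:ℝ)*((n:ℝ)+1) * ((n.factorial:ℝ))^2) * hsq2
    have gbound : g x ≤ m * (2^n * (n.factorial:ℝ))^2 := by
      rcases le_total 0 x with hx0 | hx0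
      · rw [← gone]
        exact mono ⟨hx0, hx.2⟩ ⟨zero_le_one, le_refl 1⟩ hx.2
      · rw [← gmone]
        exact anti ⟨le_refl (-1), by norm_num⟩ ⟨hx.1, hx0⟩ hx.1
    have hsq : ((RL n).eval x)^2 ≤ (2^n * (n.factorial:ℝ))^2 := by
      have hxx : (1 - x^2) * ((derivative (RL n)).eval x)^2 ≥ 0 := by
        have h1 : x^2 ≤ 1 := by nlinarith [hx.1, hx.2]
        nlinarith [sq_nonneg ((derivative (RL n)).eval x)]
      have hgx : m * ((RL n).eval x)^2 ≤ g x := by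
        rw [hg_def]; simp only [GL_eval_eq]
        rw [hm_def]
        linarith
      have := le_trans hgx gbound
      exact le_of_mul_le_mul_left this hm
    calc |(RL n).eval x| = Real.sqrt (((RL n).eval x)^2) := (Real.sqrt_sq_eq_abs _).symm
      _ ≤ Real.sqrt ((2^n * (n.factorial:ℝ))^2) := Real.sqrt_le_sqrt hsq
      _ = 2^n * (n.factorial:ℝ) := Real.sqrt_sq (by positivity)

lemma RL_zero : RL 0 = 1 := by
  simp [RL, fL]

lemma RL_coeff_ne (n : ℕ) : (RL n).coeff n ≠ 0 := by
  rw [RL_coeff_n]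
  have : (2*n).descFactorial n ≠ 0 := by
    rw [Ne, Nat.descFactorial_eq_zero_iff_lt]
    omega
  exact_mod_cast this

lemma span_RL : ∀ p : ℕ, ∀ v : Polynomial ℝ, v.degree ≤ p →
    ∃ a : ℕ → ℝ, v = ∑ j ∈ Finset.range (p+1), C (a j) * RL j := by
  intro p
  induction p with
  | zero =>
    intro v hv
    refine ⟨fun _ => v.coeff 0, ?_⟩
    rw [Finset.sum_range_one, RL_zero, mul_one]
    exact eq_C_of_degree_le_zero (by exact_mod_cast hv)
  | succ p ih =>
    intro v hv
    set c : ℝ := v.coeff (p+1) / (RL (p+1)).coeff (p+1) with hc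
    set w : Polynomial ℝ := v - C c * RL (p+1) with hw
    have hwd : w.degree ≤ p := by
      rw [degree_le_iff_coeff_zero]
      intro m hm
      have hm' : p < m := by exact_mod_cast hm
      rw [hw, coeff_sub, coeff_C_mul]
      rcases eq_or_lt_of_le (Nat.succ_le_of_lt hm') with he | hlt
      · rw [← he, hc]
        have hd : (RL (p+1)).coeff (p+1) ≠ 0 := RL_coeff_ne (p+1)
        field_simp
        ring
      · have h1 : v.coeff m = 0 := by
          apply coeff_eq_zero_of_degree_lt
          exact lt_of_le_of_lt hv (by exact_mod_cast hlt)
        have h2 : (RL (p+1)).coeff m = 0 := by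
          apply coeff_eq_zero_of_natDegree_lt
          exact lt_of_le_of_lt (RL_natDegree_le (p+1)) hlt
        rw [h1, h2]
        ring
    obtain ⟨a, haw⟩ := ih w hwd
    refine ⟨Function.update a (p+1) c, ?_⟩
    rw [Finset.sum_range_succ, Function.update_self]
    have : ∑ j ∈ Finset.range (p+1), C (Function.update a (p+1) c j) * RL j
        = ∑ j ∈ Finset.range (p+1), C (a j) * RL j := by
      apply Finset.sum_congr rfl
      intro j hj
      rw [Function.update_of_ne (by simp at hj; omega) c a]
    rw [this, ← haw, hw]
    ring

lemma sum_odd (m : ℕ) : ∑ j ∈ Finset.range m, (2*(j:ℝ)+1) = (m:ℝ)^2 := by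
  induction m with
  | zero => simp
  | succ m ih =>
    rw [Finset.sum_range_succ, ih]
    push_cast
    ring

noncomputable def NL (n : ℕ) : ℝ := ∫ x in (-1:ℝ)..1, (RL n).eval x ^ 2

lemma NL_pos (n : ℕ) : 0 < NL n := by
  have h := RL_sq n
  have hA : (0:ℝ) < 2^(2*n+1) * ((n.factorial:ℝ))^2 := by
    have : (0:ℝ) < (n.factorial:ℝ) := by exact_mod_cast n.factorial_pos
    positivity
  have h2 : (0:ℝ) < 2*(n:ℝ)+1 := by positivity
  rw [NL]
  nlinarith [h, hA, h2]

lemma RL_orth' {j k : ℕ} (h : j ≠ k) :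
    (∫ x in (-1:ℝ)..1, (RL j).eval x * (RL k).eval x) = 0 := by
  rcases lt_or_gt_of_ne h with hlt | hgt
  · have := RL_orth hlt
    rw [← this]
    apply intervalIntegral.integral_congr
    intro x _
    ring
  · exact RL_orth hgt

lemma inner_v (m : ℕ) (a : ℕ → ℝ) (v : Polynomial ℝ)
    (ha : v = ∑ j ∈ Finset.range m, C (a j) * RL j) {j : ℕ} (hj : j ∈ Finset.range m) :
    (∫ x in (-1:ℝ)..1, (RL j).eval x * v.eval x) = a j * NL j := by
  have h1 : ∀ x:ℝ, (RL j).eval x * v.eval x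
      = ∑ k ∈ Finset.range m, a k * ((RL j).eval x * (RL k).eval x) := by
    intro x
    rw [ha, eval_finset_sum, Finset.mul_sum]
    apply Finset.sum_congr rfl
    intro k _
    rw [eval_mul, eval_C]
    ring
  rw [intervalIntegral.integral_congr (g := fun x => ∑ k ∈ Finset.range m,
      a k * ((RL j).eval x * (RL k).eval x)) (fun x _ => h1 x)]
  rw [intervalIntegral.integral_finset_sum (f := fun k x => a k * ((RL j).eval x * (RL k).eval x)) (fun k _ =>
    (continuous_const.mul ((RL j).continuous.mul (RL k).continuous)).intervalIntegrable _ _)]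
  rw [Finset.sum_eq_single j]
  · rw [intervalIntegral.integral_const_mul]
    congr 1
    rw [NL]
    apply intervalIntegral.integral_congr
    intro x _
    simp [sq]
  · intro k _ hk
    rw [intervalIntegral.integral_const_mul, RL_orth' (Ne.symm hk), mul_zero]
  · intro hj'
    exact absurd hj hj'

lemma sq_expand (m : ℕ) (a : ℕ → ℝ) (v : Polynomial ℝ)
    (ha : v = ∑ j ∈ Finset.range m, C (a j) * RL j) :
    (∫ x in (-1:ℝ)..1, v.eval x ^ 2) = ∑ j ∈ Finset.range m, (a j)^2 * NL j := by
  have h1 : ∀ x:ℝ, v.eval x ^ 2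
      = ∑ j ∈ Finset.range m, a j * ((RL j).eval x * v.eval x) := by
    intro x
    rw [sq]
    nth_rewrite 1 [ha]
    rw [eval_finset_sum, Finset.sum_mul]
    apply Finset.sum_congr rfl
    intro k _
    rw [eval_mul, eval_C]
    ring
  rw [intervalIntegral.integral_congr (g := fun x => ∑ j ∈ Finset.range m,
      a j * ((RL j).eval x * v.eval x)) (fun x _ => h1 x)]
  rw [intervalIntegral.integral_finset_sum (f := fun k x => a k * ((RL k).eval x * v.eval x)) (fun k _ =>
    (continuous_const.mul ((RL k).continuous.mul v.continuous)).intervalIntegrable _ _)]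
  apply Finset.sum_congr rfl
  intro j hj
  rw [intervalIntegral.integral_const_mul, inner_v m a v ha hj]
  ring


/-- For any polynomial `v` of degree at most `p` on the interval `(-1,1)`, the supremum norm
of `v` is bounded by `(p+1)/√2` times the `L²(-1,1)` norm of `v`. -/
theorem polynomial_sup_le_L2 (p : ℕ) (v : Polynomial ℝ) (hdeg : v.degree ≤ p) :
    ∀ x ∈ Set.Icc (-1 : ℝ) 1,
      |v.eval x| ≤ (((p : ℝ) + 1) / Real.sqrt 2) *
        Real.sqrt (∫ y in (-1 : ℝ)..1, (v.eval y) ^ 2) := by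
  intro x hx
  obtain ⟨a, ha⟩ := span_RL p v hdeg
  have hI : (∫ y in (-1:ℝ)..1, (v.eval y)^2)
      = ∑ j ∈ Finset.range (p+1), (a j)^2 * NL j := sq_expand (p+1) a v ha
  have hInn : (0:ℝ) ≤ ∫ y in (-1:ℝ)..1, (v.eval y)^2 := by
    rw [hI]
    exact Finset.sum_nonneg (fun j _ => mul_nonneg (sq_nonneg _) (NL_pos j).le)
  set S : ℝ := ∑ j ∈ Finset.range (p+1), |a j| * (2^j * (j.factorial:ℝ)) with hS_def
  have hv : |v.eval x| ≤ S := by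
    rw [ha, eval_finset_sum, hS_def]
    refine le_trans (Finset.abs_sum_le_sum_abs _ _) ?_
    apply Finset.sum_le_sum
    intro j _
    rw [eval_mul, eval_C, abs_mul]
    exact mul_le_mul_of_nonneg_left (RL_bound j hx) (abs_nonneg _)
  have hSnn : 0 ≤ S :=
    Finset.sum_nonneg fun j _ => mul_nonneg (abs_nonneg _) (by positivity)
  have key : S ^ 2 ≤ (∫ y in (-1:ℝ)..1, (v.eval y)^2) * (((p:ℝ)+1)^2/2) := by
    have cs := Finset.sum_mul_sq_le_sq_mul_sq (Finset.range (p+1))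
      (fun j => |a j| * Real.sqrt (NL j))
      (fun j => (2^j * (j.factorial:ℝ)) / Real.sqrt (NL j))
    have e1 : ∀ j, |a j| * Real.sqrt (NL j) * ((2^j * (j.factorial:ℝ)) / Real.sqrt (NL j))
        = |a j| * (2^j * (j.factorial:ℝ)) := by
      intro j
      have h := Real.sqrt_pos.mpr (NL_pos j)
      field_simp
    have e2 : ∀ j, (|a j| * Real.sqrt (NL j))^2 = (a j)^2 * NL j := by
      intro j
      rw [mul_pow, sq_abs, Real.sq_sqrt (NL_pos j).le]
    have e3 : ∀ j, ((2^j * (j.factorial:ℝ)) / Real.sqrt (NL j))^2 = (2*(j:ℝ)+1)/2 := by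
      intro j
      have hN : (2*(j:ℝ)+1) * NL j = 2^(2*j+1)*((j.factorial:ℝ))^2 := by
        rw [NL]; exact RL_sq j
      have hB : ((2:ℝ)^j * (j.factorial:ℝ))^2 * 2 = 2^(2*j+1)*((j.factorial:ℝ))^2 := by
        rw [mul_pow, ← pow_mul, show 2*j+1 = j*2+1 by ring, pow_succ]
        ring
      rw [div_pow, Real.sq_sqrt (NL_pos j).le, div_eq_div_iff (NL_pos j).ne' two_ne_zero]
      rw [hB, ← hN]
    simp only [e1, e2, e3] at cs
    rw [← hS_def] at cs
    have hsum : ∑ j ∈ Finset.range (p+1), (2*(j:ℝ)+1)/2 = ((p:ℝ)+1)^2/2 := by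
      rw [← Finset.sum_div, sum_odd]
      push_cast
      ring
    rw [hsum, ← hI] at cs
    exact cs
  have hfin : S ≤ Real.sqrt ((∫ y in (-1:ℝ)..1, (v.eval y)^2) * (((p:ℝ)+1)^2/2)) := by
    calc S = Real.sqrt (S^2) := (Real.sqrt_sq hSnn).symm
      _ ≤ _ := Real.sqrt_le_sqrt key
  refine le_trans hv (le_trans hfin (le_of_eq ?_))
  rw [Real.sqrt_mul hInn, Real.sqrt_div (by positivity : (0:ℝ) ≤ ((p:ℝ)+1)^2),
    Real.sqrt_sq (by positivity : (0:ℝ) ≤ (p:ℝ)+1)]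
  ring
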